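/- Let 0 < s = t < 1, n > 2s, and p,q > 0 with pq > 1. If (2s/p + 2s)·p/(pq−1) ≥ n − 2s, then 1/(p+1) + 1/(q+1) > (n − 2s)/n. -/

import Mathlib

/-- for s = t, condition (4) implies the subcriticality condition
1/(p+1) + 1/(q+1) > (n - 2s)/n. -/
theorem stmt_2 (n s p q : ℝ)
    (hs : 0 < s) (hs1 : s < 1) (hns : 2 * s < n)
    (hp : 0 < p) (hq : 0 < q) (hpq : 1 < p * q)
    (h : (2 * s / p + 2 * s) * p / (p * q - 1) ≥ n - 2 * s) :
    1 / (p + 1) + 1 / (q + 1) > (n - 2 * s) / n := by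
  have h1 : 0 < p * q - 1 := by linarith
  have h2 : (2 * s / p + 2 * s) * p = 2 * s * (1 + p) := by
    field_simp
  have h4 : (n - 2 * s) * (p * q - 1) ≤ 2 * s * (1 + p) := by
    rw [h2] at h
    exact (le_div_iff₀ h1).mp h
  have hn : 0 < n := by linarith [hs, hns]
  have hp1 : 0 < p + 1 := by linarith
  have hq1 : 0 < q + 1 := by linarith
  rw [gt_iff_lt, div_add_div _ _ hp1.ne' hq1.ne', div_lt_div_iff₀ hn (by positivity)]
  nlinarith [h4, mul_pos hs hq1, hs, hq]
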